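/- Let G be a minimal non-weakly flat path extendable graph, let P be a witness path for G with witness sets W1 and W2, and let X be a cutset of G such that X ∩ V(P) is nonempty and connected and X ⊆ N[X ∩ V(P)]. Then no connected component of G \ X is anticomplete to X ∩ V(P). -/

import Mathlib

open Classical

universe u

/-- `IsHoleOn G n H`: `H` is the vertex set of an induced cycle of `G` of length `n ≥ 4`. -/
def IsHoleOn {V : Type u} (G : SimpleGraph V) (n : ℕ) (H : Set V) : Prop :=
  4 ≤ n ∧ ∃ f : ZMod n → V, Function.Injective f ∧ Set.range f = H ∧
    ∀ i j : ZMod n, G.Adj (f i) (f j) ↔ (j = i + 1 ∨ i = j + 1)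

/-- A hole: an induced cycle of length at least 4. -/
def IsHole {V : Type u} (G : SimpleGraph V) (H : Set V) : Prop :=
  ∃ n : ℕ, IsHoleOn G n H

/-- No induced cycle of even length. -/
def EvenHoleFree {V : Type u} (G : SimpleGraph V) : Prop :=
  ∀ (n : ℕ) (H : Set V), IsHoleOn G n H → ¬ Even n

/-- `G[X]` is chordal: no hole of `G` is contained in `X`. -/
def ChordalSet {V : Type u} (G : SimpleGraph V) (X : Set V) : Prop :=
  ∀ H : Set V, H ⊆ X → ¬ IsHole G H

/-- A wheel `(H, w)`: a hole `H` and `w ∉ H` with at least 3 neighbors in `H`. -/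
def IsWheel {V : Type u} (G : SimpleGraph V) (H : Set V) (w : V) : Prop :=
  IsHole G H ∧ w ∉ H ∧ 3 ≤ (H ∩ {u | G.Adj w u}).ncard

/-- An induced path of `G`, recorded as the list of its vertices in order. -/
def IsInducedPathList {V : Type u} (G : SimpleGraph V) (l : List V) : Prop :=
  l ≠ [] ∧ l.Nodup ∧
    ∀ (i j : ℕ) (hi : i < l.length) (hj : j < l.length),
      G.Adj (l.get ⟨i, hi⟩) (l.get ⟨j, hj⟩) ↔ (i + 1 = j ∨ j + 1 = i)

/-- A vertex set that induces a path. -/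
def InducesPath {V : Type u} (G : SimpleGraph V) (S : Set V) : Prop :=
  ∃ l : List V, IsInducedPathList G l ∧ {v | v ∈ l} = S

/-- A sector wheel: a wheel `(H, w)` where `w` is complete to `H` or
`N(w) ∩ H` induces a path. -/
def IsSectorWheel {V : Type u} (G : SimpleGraph V) (H : Set V) (w : V) : Prop :=
  IsWheel G H w ∧
    ((∀ u ∈ H, G.Adj w u) ∨ InducesPath G (H ∩ {u | G.Adj w u}))

/-- A twin wheel: a wheel `(H, w)` where `N(w) ∩ H` induces a three-vertex path. -/
def IsTwinWheel {V : Type u} (G : SimpleGraph V) (H : Set V) (w : V) : Prop :=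
  IsWheel G H w ∧ ∃ a b c : V, a ≠ b ∧ b ≠ c ∧ a ≠ c ∧
    H ∩ {u | G.Adj w u} = {a, b, c} ∧ G.Adj a b ∧ G.Adj b c ∧ ¬ G.Adj a c

/-- A short pyramid: a wheel `(H, w)` where `N(w) ∩ H` is an edge plus an isolated vertex. -/
def IsShortPyramid {V : Type u} (G : SimpleGraph V) (H : Set V) (w : V) : Prop :=
  IsWheel G H w ∧ ∃ a b c : V, a ≠ b ∧ b ≠ c ∧ a ≠ c ∧
    H ∩ {u | G.Adj w u} = {a, b, c} ∧ G.Adj a b ∧ ¬ G.Adj a c ∧ ¬ G.Adj b c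

/-- A flat path: an induced path all of whose interior vertices have degree 2 in `G`. -/
def IsFlatPath {V : Type u} (G : SimpleGraph V) (l : List V) : Prop :=
  IsInducedPathList G l ∧
    ∀ (i : ℕ) (hi : i < l.length), 0 < i → i + 1 < l.length →
      ({u | G.Adj (l.get ⟨i, hi⟩) u}).ncard = 2

/-- The closed neighborhood `N[S]` of a set of vertices. -/
def ClosedNbhd {V : Type u} (G : SimpleGraph V) (S : Set V) : Set V :=
  S ∪ {v | ∃ s ∈ S, G.Adj v s}

/-- `(W1, W2)` (a precover on a path with vertex set `S`) extends to a chordal cover of `G`. -/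
def ExtendsToCover {V : Type u} (G : SimpleGraph V) (S W1 W2 : Set V) : Prop :=
  ∃ X1 X2 : Set V, W1 ⊆ X1 ∧ W2 ⊆ X2 ∧ ChordalSet G X1 ∧ ChordalSet G X2 ∧
    X1 ∩ X2 = S ∧ X1 ∪ X2 = Set.univ

/-- Flat path extendable. -/
def FPE {V : Type u} (G : SimpleGraph V) : Prop :=
  ∀ l : List V, IsFlatPath G l →
    ∀ W1 W2 : Set V, ChordalSet G W1 → ChordalSet G W2 →
      W1 ∩ W2 = {v | v ∈ l} → W1 ∪ W2 = ClosedNbhd G {v | v ∈ l} →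
      ExtendsToCover G {v | v ∈ l} W1 W2

/-- Weakly flat path extendable: only paths with at most two vertices are considered. -/
def WeaklyFPE {V : Type u} (G : SimpleGraph V) : Prop :=
  ∀ l : List V, IsInducedPathList G l → l.length ≤ 2 →
    ∀ W1 W2 : Set V, ChordalSet G W1 → ChordalSet G W2 →
      W1 ∩ W2 = {v | v ∈ l} → W1 ∪ W2 = ClosedNbhd G {v | v ∈ l} →
      ExtendsToCover G {v | v ∈ l} W1 W2

/-- Minimal non flat path extendable. -/
def MNFPE {V : Type u} (G : SimpleGraph V) : Prop :=
  ¬ FPE G ∧ ∀ S : Set V, S ≠ Set.univ → FPE (G.induce S)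

/-- Minimal non-weakly flat path extendable. -/
def MinNonWeaklyFPE {V : Type u} (G : SimpleGraph V) : Prop :=
  ¬ WeaklyFPE G ∧ ∀ S : Set V, S ≠ Set.univ → WeaklyFPE (G.induce S)

/-- A witness path `l` with witness sets `W1, W2`: a precover on a flat path
admitting no extension to a chordal cover. -/
def WitnessPath {V : Type u} (G : SimpleGraph V) (l : List V) (W1 W2 : Set V) : Prop :=
  IsFlatPath G l ∧ ChordalSet G W1 ∧ ChordalSet G W2 ∧
    W1 ∩ W2 = {v | v ∈ l} ∧ W1 ∪ W2 = ClosedNbhd G {v | v ∈ l} ∧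
    ¬ ExtendsToCover G {v | v ∈ l} W1 W2

/-- A witness path of length zero or one with witness sets, for the weak notion. -/
def WeakWitness {V : Type u} (G : SimpleGraph V) (l : List V) (W1 W2 : Set V) : Prop :=
  IsInducedPathList G l ∧ l.length ≤ 2 ∧ ChordalSet G W1 ∧ ChordalSet G W2 ∧
    W1 ∩ W2 = {v | v ∈ l} ∧ W1 ∪ W2 = ClosedNbhd G {v | v ∈ l} ∧
    ¬ ExtendsToCover G {v | v ∈ l} W1 W2

/-- `N(v)` is the union of a clique and a singleton. -/
def NearlySimplicial {V : Type u} (G : SimpleGraph V) (v : V) : Prop :=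
  ∃ (K : Set V) (u : V), G.IsClique K ∧ {w | G.Adj v w} = K ∪ {u}

/-- `G` has a star cutset. -/
def HasStarCutset {V : Type u} (G : SimpleGraph V) : Prop :=
  G.Connected ∧ ∃ (v : V) (C : Set V), v ∈ C ∧ C ⊆ insert v {u | G.Adj v u} ∧
    ¬ (G.induce (Cᶜ : Set V)).Connected

/-- `v` is the center of a star cutset of `G`. -/
def IsStarCutsetCenter {V : Type u} (G : SimpleGraph V) (v : V) : Prop :=
  G.Connected ∧ ∃ C : Set V, v ∈ C ∧ C ⊆ insert v {u | G.Adj v u} ∧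
    ¬ (G.induce (Cᶜ : Set V)).Connected

/-- `G` has a full star cutset, i.e. a star cutset of the form `N[v]`. -/
def HasFullStarCutset {V : Type u} (G : SimpleGraph V) : Prop :=
  G.Connected ∧ ∃ v : V,
    ¬ (G.induce (((insert v {u | G.Adj v u}) : Set V)ᶜ)).Connected

/-- A clique cutset. -/
def IsCliqueCutset {V : Type u} (G : SimpleGraph V) (Q : Set V) : Prop :=
  G.IsClique Q ∧ ¬ (G.induce (Qᶜ : Set V)).Connected

/-- `C` is (the vertex set of) a connected component of `G[S]`. -/
def IsCompOf {V : Type u} (G : SimpleGraph V) (S C : Set V) : Prop :=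
  ∃ comp : (G.induce S).ConnectedComponent, C = Subtype.val '' comp.supp

/-- A marker path for the side `(A, C, B)` of a 2-join, with ends `a ∈ A` and `b ∈ B`
and interior in `C`. -/
def IsMarkerPath {V : Type u} (G : SimpleGraph V) (A C B : Set V) (a b : V)
    (l : List V) : Prop :=
  IsInducedPathList G l ∧ a ∈ A ∧ b ∈ B ∧
    ∃ m : List V, l = a :: (m ++ [b]) ∧ ∀ v ∈ m, v ∈ C

/-- A 2-join of `G`. -/
def IsTwoJoin {V : Type u} (G : SimpleGraph V) (A1 C1 B1 A2 C2 B2 : Set V) : Prop :=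
  ([A1, C1, B1, A2, C2, B2] : List (Set V)).Pairwise Disjoint ∧
  A1 ∪ C1 ∪ B1 ∪ A2 ∪ C2 ∪ B2 = Set.univ ∧
  (∀ a ∈ A1, ∀ b ∈ A2, G.Adj a b) ∧
  (∀ a ∈ B1, ∀ b ∈ B2, G.Adj a b) ∧
  (∀ u ∈ A1 ∪ C1 ∪ B1, ∀ v ∈ A2 ∪ C2 ∪ B2, G.Adj u v →
    ((u ∈ A1 ∧ v ∈ A2) ∨ (u ∈ B1 ∧ v ∈ B2))) ∧
  (∃ (a b : V) (l : List V), IsMarkerPath G A1 C1 B1 a b l ∧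
      A1 ∪ C1 ∪ B1 ≠ {v | v ∈ l}) ∧
  (∃ (a b : V) (l : List V), IsMarkerPath G A2 C2 B2 a b l ∧
      A2 ∪ C2 ∪ B2 ≠ {v | v ∈ l})

/-- A leaf of a graph: a vertex of degree one. -/
def IsLeaf {V : Type u} (T : SimpleGraph V) (v : V) : Prop :=
  ({u | T.Adj v u}).ncard = 1

/-- The graph `B(T)` built from a tree `T` whose bipartition is given by the proper
2-coloring `c`: vertices are the edges of `T` plus two extra vertices `x_false, x_true`
(encoded as `Bool`); two edges are adjacent iff they share an endpoint, `x_i` is adjacent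
to the pendant edge at each leaf on side `i`, and `x_false` is adjacent to `x_true`. -/
def BGraph {V : Type u} (T : SimpleGraph V) (c : V → Bool) :
    SimpleGraph (↥T.edgeSet ⊕ Bool) :=
  SimpleGraph.fromRel fun a b =>
    match a, b with
    | Sum.inl e, Sum.inl f => ∃ v : V, v ∈ e.val ∧ v ∈ f.val
    | Sum.inl e, Sum.inr i => ∃ v : V, IsLeaf T v ∧ c v = i ∧ v ∈ e.val
    | Sum.inr _, Sum.inl _ => False
    | Sum.inr _, Sum.inr _ => True

section AuxLemmas

lemma zmod_succ_val {N : ℕ} (hN : 2 ≤ N) (i : ZMod N) :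
    (haveI : NeZero N := ⟨by omega⟩; (i + 1).val = (i.val + 1) % N) := by
  haveI : NeZero N := ⟨by omega⟩
  haveI : Fact (1 < N) := ⟨by omega⟩
  rw [ZMod.val_add, ZMod.val_one]

lemma zmod_succ_iff {N : ℕ} (hN : 2 ≤ N) (i j : ZMod N) :
    (haveI : NeZero N := ⟨by omega⟩;
      (j = i + 1 ↔ (j.val = i.val + 1 ∨ (j.val = 0 ∧ i.val = N - 1)))) := by
  haveI : NeZero N := ⟨by omega⟩
  rw [← (ZMod.val_injective N).eq_iff, zmod_succ_val hN]
  have hi := ZMod.val_lt i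
  have hj := ZMod.val_lt j
  rcases Nat.lt_or_ge (i.val + 1) N with hlt | hge
  · rw [Nat.mod_eq_of_lt hlt]; omega
  · have : i.val + 1 = N := by omega
    rw [this, Nat.mod_self]; omega

lemma holeOfCycle {V : Type u} (G : SimpleGraph V) {N : ℕ} (hN : 4 ≤ N) (h : ℕ → V)
    (hdist : ∀ a, a < N → ∀ b, b < N → h a = h b → a = b)
    (hadj : ∀ a, a < N → ∀ b, b < N →
      (G.Adj (h a) (h b) ↔ (b = a + 1 ∨ a = b + 1 ∨ (a = 0 ∧ b = N - 1) ∨ (b = 0 ∧ a = N - 1)))) :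
    IsHoleOn G N {v | ∃ a, a < N ∧ h a = v} := by
  haveI : NeZero N := ⟨by omega⟩
  refine ⟨hN, fun i => h i.val, ?_, ?_, ?_⟩
  · intro i j hij
    exact ZMod.val_injective N (hdist _ (ZMod.val_lt i) _ (ZMod.val_lt j) hij)
  · ext v
    constructor
    · rintro ⟨i, rfl⟩; exact ⟨i.val, ZMod.val_lt i, rfl⟩
    · rintro ⟨a, ha, rfl⟩
      exact ⟨(a : ZMod N), by simp only []; rw [ZMod.val_cast_of_lt ha]⟩
  · intro i j
    rw [hadj _ (ZMod.val_lt i) _ (ZMod.val_lt j)]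
    have h1 := zmod_succ_iff (by omega : 2 ≤ N) i j
    have h2 := zmod_succ_iff (by omega : 2 ≤ N) j i
    have hi := ZMod.val_lt i
    have hj := ZMod.val_lt j
    rw [h1, h2]
    omega


lemma zmod_cast_inj {n a b : ℕ} (ha : a < n) (hb : b < n)
    (h : (a : ZMod n) = (b : ZMod n)) : a = b := by
  have := congrArg ZMod.val h
  rwa [ZMod.val_cast_of_lt ha, ZMod.val_cast_of_lt hb] at this

lemma extract {V : Type u} (G : SimpleGraph V) {n : ℕ} (hn : 4 ≤ n) (f : ZMod n → V)
    (hinj : Function.Injective f)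
    (hadj : ∀ i j, G.Adj (f i) (f j) ↔ (j = i + 1 ∨ i = j + 1))
    (C X : Set V)
    (hbd : ∀ i j : ZMod n, f i ∈ C → f j ∉ C → G.Adj (f i) (f j) → f j ∈ X)
    (i0 : ZMod n) (hi0 : f i0 ∈ C)
    (j0 : ZMod n) (hj0C : f j0 ∉ C) (hj0X : f j0 ∉ X) :
    ∃ (m : ℕ) (g : ℕ → V), 1 ≤ m ∧
      (∀ a, a ≤ m + 1 → ∀ b, b ≤ m + 1 → g a = g b → a = b) ∧
      (∀ a, a ≤ m + 1 → ∀ b, b ≤ m + 1 → (G.Adj (g a) (g b) ↔ (b = a + 1 ∨ a = b + 1))) ∧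
      g 0 ∈ X ∧ g 0 ∉ C ∧ g (m+1) ∈ X ∧ g (m+1) ∉ C ∧
      (∀ a, 1 ≤ a → a ≤ m → g a ∈ C) ∧
      (∀ a, a ≤ m + 1 → g a ∈ Set.range f) := by
  haveI : NeZero n := ⟨by omega⟩
  have hcastval : ∀ a : ZMod n, ((a.val : ℕ) : ZMod n) = a := fun a => ZMod.natCast_rightInverse a
  have hne : j0 ≠ i0 := fun h => hj0C (h ▸ hi0)
  have hQ1 : ∃ t : ℕ, 0 < t ∧ f (i0 + (t : ZMod n)) ∉ C := by
    refine ⟨(j0 - i0).val, ?_, ?_⟩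
    · rcases Nat.eq_zero_or_pos (j0 - i0).val with h | h
      · exfalso; apply hne; have := (ZMod.val_eq_zero _).mp h; rwa [sub_eq_zero] at this
      · exact h
    · rw [hcastval]; simpa using hj0C
  have hQ2 : ∃ t : ℕ, 0 < t ∧ f (i0 - (t : ZMod n)) ∉ C := by
    refine ⟨(i0 - j0).val, ?_, ?_⟩
    · rcases Nat.eq_zero_or_pos (i0 - j0).val with h | h
      · exfalso; apply hne; have := (ZMod.val_eq_zero _).mp h
        rw [sub_eq_zero] at this; exact this.symm
      · exact h
    · rw [hcastval]; simpa using hj0C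
  set k1 := Nat.find hQ1 with hk1def
  set k2 := Nat.find hQ2 with hk2def
  have hk1pos : 0 < k1 := (Nat.find_spec hQ1).1
  have hk1out : f (i0 + (k1 : ZMod n)) ∉ C := (Nat.find_spec hQ1).2
  have hk2pos : 0 < k2 := (Nat.find_spec hQ2).1
  have hk2out : f (i0 - (k2 : ZMod n)) ∉ C := (Nat.find_spec hQ2).2
  have hC1 : ∀ t, t < k1 → f (i0 + (t : ZMod n)) ∈ C := by
    intro t ht
    rcases Nat.eq_zero_or_pos t with rfl | hpos
    · simpa using hi0
    · by_contra hc; exact Nat.find_min hQ1 ht ⟨hpos, hc⟩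
  have hC2 : ∀ t, t < k2 → f (i0 - (t : ZMod n)) ∈ C := by
    intro t ht
    rcases Nat.eq_zero_or_pos t with rfl | hpos
    · simpa using hi0
    · by_contra hc; exact Nat.find_min hQ2 ht ⟨hpos, hc⟩
  have hadjstep : ∀ i : ZMod n, G.Adj (f i) (f (i+1)) := by
    intro i; rw [hadj]; left; rfl
  have hsucc : ∀ k : ℕ, 1 ≤ k → ((k : ℕ) : ZMod n) = (((k - 1 : ℕ)) : ZMod n) + 1 := by
    intro k hk; rw [← Nat.cast_succ]; congr 1; omega
  -- boundary vertices in X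
  have hx1 : f (i0 + (k1 : ZMod n)) ∈ X := by
    apply hbd (i0 + ((k1 - 1 : ℕ) : ZMod n)) (i0 + (k1 : ZMod n)) (hC1 _ (by omega)) hk1out
    have h : i0 + (k1 : ZMod n) = (i0 + ((k1 - 1 : ℕ) : ZMod n)) + 1 := by
      rw [hsucc k1 hk1pos]; ring
    rw [h]; exact hadjstep _
  have hx2 : f (i0 - (k2 : ZMod n)) ∈ X := by
    apply hbd (i0 - ((k2 - 1 : ℕ) : ZMod n)) (i0 - (k2 : ZMod n)) (hC2 _ (by omega)) hk2out
    rw [hadj]; right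
    rw [hsucc k2 hk2pos]; ring
  -- bounds on k1, k2
  have hd1 : k1 < (j0 - i0).val := by
    rcases Nat.lt_or_ge k1 (j0 - i0).val with h | h
    · exact h
    exfalso
    rcases Nat.lt_or_ge (j0 - i0).val k1 with h' | h'
    · have := hC1 _ h'
      rw [hcastval] at this
      simp at this
      exact hj0C this
    · have heq : (j0 - i0).val = k1 := le_antisymm h h'
      apply hj0X
      have : i0 + ((k1 : ℕ) : ZMod n) = j0 := by
        rw [← heq, hcastval]; ring
      rw [← this]; exact hx1
  have hd2 : k2 < (i0 - j0).val := by
    rcases Nat.lt_or_ge k2 (i0 - j0).val with h | h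
    · exact h
    exfalso
    rcases Nat.lt_or_ge (i0 - j0).val k2 with h' | h'
    · have := hC2 _ h'
      rw [hcastval] at this
      simp at this
      exact hj0C this
    · have heq : (i0 - j0).val = k2 := le_antisymm h h'
      apply hj0X
      have : i0 - ((k2 : ℕ) : ZMod n) = j0 := by
        rw [← heq, hcastval]; ring
      rw [← this]; exact hx2
  have hvalsum : (j0 - i0).val + (i0 - j0).val = n := by
    have h1 : (j0 - i0) + (i0 - j0) = 0 := by ring
    have h2 : (j0 - i0) ≠ 0 := by rw [sub_ne_zero]; exact hne
    have h3 : (i0 - j0) = -(j0 - i0) := by ring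
    haveI : NeZero (j0 - i0) := ⟨h2⟩
    rw [h3, ZMod.val_neg_of_ne_zero]
    have h4 : (j0 - i0).val < n := ZMod.val_lt _
    have h5 : (j0 - i0).val ≠ 0 := fun hh => h2 ((ZMod.val_eq_zero _).mp hh)
    omega
  have hsum : k1 + k2 + 2 ≤ n := by omega
  clear hd1 hd2 hvalsum hne hj0C hj0X
  -- the arc
  refine ⟨k1 + k2 - 1, fun a => f (i0 - (k2 : ZMod n) + (a : ZMod n)), by omega, ?_, ?_, ?_, ?_, ?_, ?_, ?_, ?_⟩
  · -- injectivity
    intro a ha b hb heq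
    have h1 : (a : ZMod n) = (b : ZMod n) := by
      have := hinj heq
      have h2 : i0 - (k2 : ZMod n) + (a : ZMod n) = i0 - (k2 : ZMod n) + (b : ZMod n) := this
      exact add_left_cancel h2
    exact zmod_cast_inj (by omega) (by omega) h1
  · -- adjacency
    intro a ha b hb
    rw [hadj]
    constructor
    · rintro (h | h)
      · left
        have h1 : ((b : ℕ) : ZMod n) = ((a + 1 : ℕ) : ZMod n) := by
          have h2 : i0 - (k2 : ZMod n) + (b : ZMod n) = i0 - (k2 : ZMod n) + ((a : ZMod n) + 1) := by
            rw [h]; ring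
          push_cast
          exact add_left_cancel h2
        exact zmod_cast_inj (by omega) (by omega) h1
      · right
        have h1 : ((a : ℕ) : ZMod n) = ((b + 1 : ℕ) : ZMod n) := by
          have h2 : i0 - (k2 : ZMod n) + (a : ZMod n) = i0 - (k2 : ZMod n) + ((b : ZMod n) + 1) := by
            rw [h]; ring
          push_cast
          exact add_left_cancel h2
        exact zmod_cast_inj (by omega) (by omega) h1
    · rintro (rfl | rfl)
      · left; push_cast; ring
      · right; push_cast; ring
  · -- g 0 ∈ X
    simpa using hx2
  · simpa using hk2out
  · -- g (m+1) ∈ X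
    have h1 : i0 - (k2 : ZMod n) + ((k1 + k2 - 1 + 1 : ℕ) : ZMod n) = i0 + (k1 : ZMod n) := by
      have : (k1 + k2 - 1 + 1 : ℕ) = k1 + k2 := by omega
      rw [this]; push_cast; ring
    show f (i0 - (k2 : ZMod n) + ((k1 + k2 - 1 + 1 : ℕ) : ZMod n)) ∈ X
    rw [h1]; exact hx1
  · have h1 : i0 - (k2 : ZMod n) + ((k1 + k2 - 1 + 1 : ℕ) : ZMod n) = i0 + (k1 : ZMod n) := by
      have : (k1 + k2 - 1 + 1 : ℕ) = k1 + k2 := by omega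
      rw [this]; push_cast; ring
    show f (i0 - (k2 : ZMod n) + ((k1 + k2 - 1 + 1 : ℕ) : ZMod n)) ∉ C
    rw [h1]; exact hk1out
  · -- middles in C
    intro a ha1 ham
    rcases Nat.lt_or_ge a k2 with h | h
    · have h1 : i0 - (k2 : ZMod n) + (a : ZMod n) = i0 - ((k2 - a : ℕ) : ZMod n) := by
        rw [Nat.cast_sub (by omega)]; ring
      show f (i0 - (k2 : ZMod n) + (a : ZMod n)) ∈ C
      rw [h1]; exact hC2 _ (by omega)
    · have h1 : i0 - (k2 : ZMod n) + (a : ZMod n) = i0 + ((a - k2 : ℕ) : ZMod n) := by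
        rw [Nat.cast_sub (by omega)]; ring
      show f (i0 - (k2 : ZMod n) + (a : ZMod n)) ∈ C
      rw [h1]; exact hC1 _ (by omega)
  · intro a _; exact Set.mem_range_self _


section Aux
variable {V : Type u} {G : SimpleGraph V}

lemma chordal_mono {Y Z : Set V} (h : Y ⊆ Z) (hZ : ChordalSet G Z) : ChordalSet G Y :=
  fun H hH => hZ H (hH.trans h)

lemma chordal_image_of_induce {T : Set V} {Y' : Set ↥T}
    (h : ChordalSet (G.induce T) Y') : ChordalSet G (Subtype.val '' Y') := by
  rintro H hH ⟨n, hn4, f, hinj, hrange, hadjf⟩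
  have hmem : ∀ i : ZMod n, f i ∈ Subtype.val '' Y' := fun i => hH (hrange ▸ Set.mem_range_self i)
  have hT : ∀ i : ZMod n, f i ∈ T := fun i => by
    obtain ⟨a, ha, hav⟩ := hmem i; exact hav ▸ a.2
  set f' : ZMod n → ↥T := fun i => ⟨f i, hT i⟩ with hf'
  apply h (Set.range f') (by
    rintro _ ⟨i, rfl⟩
    obtain ⟨a, ha, hav⟩ := hmem i
    have : a = f' i := Subtype.ext hav
    exact this ▸ ha)
  refine ⟨n, hn4, f', fun i j hij => hinj (congrArg Subtype.val hij), rfl, ?_⟩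
  intro i j
  show G.Adj (f i) (f j) ↔ _
  exact hadjf i j

lemma chordal_preimage_induce {T : Set V} {Y : Set V} (h : ChordalSet G Y) :
    ChordalSet (G.induce T) (Subtype.val ⁻¹' Y) := by
  rintro H hH ⟨n, hn4, f, hinj, hrange, hadjf⟩
  apply h (Subtype.val '' H) (by
    rintro _ ⟨a, ha, rfl⟩; exact hH ha)
  refine ⟨n, hn4, fun i => (f i).val, fun i j hij => hinj (Subtype.ext hij), ?_, hadjf⟩
  rw [← hrange, ← Set.range_comp]; rfl

lemma inducedPath_lift {T : Set V} {l : List V} (hl : IsInducedPathList G l)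
    (hsub : ∀ v ∈ l, v ∈ T) :
    IsInducedPathList (G.induce T) (l.pmap (fun v h => (⟨v, h⟩ : ↥T)) hsub) := by
  obtain ⟨hne, hnd, hadj⟩ := hl
  refine ⟨by simpa using hne, ?_, ?_⟩
  · exact hnd.pmap (fun a ha b hb h => congrArg Subtype.val h)
  · intro i j hi hj
    rw [List.get_eq_getElem, List.get_eq_getElem, List.getElem_pmap, List.getElem_pmap]
    show G.Adj (l.get _) (l.get _) ↔ _
    rw [hadj]

lemma mem_pmap_lift {T : Set V} {l : List V} (hsub : ∀ v ∈ l, v ∈ T) (a : ↥T) :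
    a ∈ l.pmap (fun v h => (⟨v, h⟩ : ↥T)) hsub ↔ a.val ∈ l := by
  rw [List.mem_pmap]
  constructor
  · rintro ⟨b, hb, rfl⟩; exact hb
  · intro h; exact ⟨a.val, h, rfl⟩

lemma closedNbhd_induce {T P : Set V} (hP : P ⊆ T) :
    ClosedNbhd (G.induce T) (Subtype.val ⁻¹' P) = Subtype.val ⁻¹' (ClosedNbhd G P) := by
  ext v
  simp only [ClosedNbhd, Set.mem_union, Set.mem_preimage, Set.mem_setOf_eq]
  constructor
  · rintro (h | ⟨s, hs, hadj⟩)
    · exact Or.inl h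
    · exact Or.inr ⟨s.val, hs, hadj⟩
  · rintro (h | ⟨s, hs, hadj⟩)
    · exact Or.inl h
    · exact Or.inr ⟨⟨s, hP hs⟩, hs, hadj⟩

end Aux


variable {V : Type u} {G : SimpleGraph V}

lemma no_three {l : List V} (hnd : l.Nodup) (hlen : l.length ≤ 2)
    {a b c : V} (ha : a ∈ l) (hb : b ∈ l) (hc : c ∈ l)
    (hab : a ≠ b) (hbc : b ≠ c) (hac : a ≠ c) : False := by
  classical
  have h1 : ({a, b, c} : Finset V) ⊆ l.toFinset := by
    intro x hx
    simp only [Finset.mem_insert, Finset.mem_singleton] at hx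
    rcases hx with rfl | rfl | rfl <;> simpa using (by assumption : x ∈ l)
  have h2 : ({a, b, c} : Finset V).card = 3 := by
    rw [Finset.card_insert_of_notMem (by simp [hab, hac]),
        Finset.card_insert_of_notMem (by simp [hbc])]
    simp
  have h3 := Finset.card_le_card h1
  rw [h2, List.toFinset_card_of_nodup hnd] at h3
  omega

lemma adj_of_two_mem {l : List V} (hl : IsInducedPathList G l) (hlen : l.length ≤ 2)
    {a b : V} (ha : a ∈ l) (hb : b ∈ l) (hab : a ≠ b) : G.Adj a b := by
  obtain ⟨hne, hnd, hadj⟩ := hl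
  obtain ⟨i, hia⟩ := List.get_of_mem ha
  obtain ⟨j, hjb⟩ := List.get_of_mem hb
  have hij : i ≠ j := fun h => hab (by rw [← hia, ← hjb, h])
  have hi := i.2
  have hj := j.2
  have : (i.val = 0 ∧ j.val = 1) ∨ (i.val = 1 ∧ j.val = 0) := by
    have : i.val ≠ j.val := fun h => hij (Fin.ext h)
    omega
  rw [← hia, ← hjb]
  rcases this with ⟨h1, h2⟩ | ⟨h1, h2⟩ <;>
    · have := hadj i.val j.val (by omega) (by omega)
      simp only [Fin.eta] at this
      rw [this]
      omega

lemma side_chordal {V : Type u} (G : SimpleGraph V) (C X S : Set V) (l : List V)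
    (hl : IsInducedPathList G l) (hlen : l.length ≤ 2) (hSl : ∀ v ∈ S, v ∈ l)
    (hSX : S ⊆ X) (hCX : ∀ c ∈ C, c ∉ X)
    (hanti : ∀ u ∈ C, ∀ w ∈ S, ¬ G.Adj u w)
    (hclose : ∀ u ∈ C, ∀ w, w ∉ X → G.Adj u w → w ∈ C)
    (hXN : ∀ x ∈ X, x ∈ S ∨ ∃ s ∈ S, G.Adj x s)
    (XA YA : Set V)
    (hXAc : ChordalSet G XA) (hYAc : ChordalSet G YA)
    (hXAC : ∀ v ∈ XA, v ∉ C) (hYA : YA ⊆ C ∪ X)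
    (hXXA : X ∩ XA ⊆ YA) (hXYA : X ∩ YA ⊆ XA) (hSYA : S ⊆ YA) :
    ChordalSet G (XA ∪ YA) := by
  rintro H hH hole
  obtain ⟨n, hn4, f, hinj, hrange, hadjf⟩ := hole
  have hHf : ∀ i : ZMod n, f i ∈ XA ∪ YA := fun i => hH (hrange ▸ Set.mem_range_self i)
  by_cases hc1 : ∃ i0, f i0 ∈ C
  case neg =>
    -- H ∩ C = ∅, so H ⊆ XA
    push_neg at hc1
    have hsub : H ⊆ XA := by
      rw [← hrange]
      rintro _ ⟨i, rfl⟩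
      rcases hHf i with h | h
      · exact h
      · rcases hYA h with hc | hx
        · exact absurd hc (hc1 i)
        · exact hXYA ⟨hx, h⟩
    exact hXAc H hsub ⟨n, hn4, f, hinj, hrange, hadjf⟩
  by_cases hc2 : ∃ j0, f j0 ∉ C ∧ f j0 ∉ X
  case neg =>
    -- H ⊆ C ∪ X, so H ⊆ YA
    push_neg at hc2
    have hsub : H ⊆ YA := by
      rw [← hrange]
      rintro _ ⟨i, rfl⟩
      rcases hHf i with h | h
      · exact hXXA ⟨hc2 i (hXAC _ h), h⟩
      · exact h
    exact hYAc H hsub ⟨n, hn4, f, hinj, hrange, hadjf⟩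
  -- main case
  obtain ⟨i0, hi0⟩ := hc1
  obtain ⟨j0, hj0C, hj0X⟩ := hc2
  have hbd : ∀ i j : ZMod n, f i ∈ C → f j ∉ C → G.Adj (f i) (f j) → f j ∈ X := by
    intro i j hiC hjC hadj
    by_contra hjX
    exact hjC (hclose _ hiC _ hjX hadj)
  obtain ⟨m, g, hm, hgdist, hgadj, hy_X, hy_C, hx_X, hx_C, hgC, hgrange⟩ :=
    extract G hn4 f hinj hadjf C X hbd i0 hi0 j0 hj0C hj0X
  have hgYA : ∀ a, a ≤ m + 1 → g a ∈ YA := by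
    intro a ha
    have hmem : g a ∈ XA ∪ YA := by
      obtain ⟨i, hi⟩ := hgrange a ha
      exact hi ▸ hHf i
    rcases hmem with h | h
    · rcases show a = 0 ∨ (1 ≤ a ∧ a ≤ m) ∨ a = m + 1 by omega with rfl | ⟨h1, h2⟩ | rfl
      · exact hXXA ⟨hy_X, h⟩
      · exact absurd (hgC a h1 h2) (hXAC _ h)
      · exact hXXA ⟨hx_X, h⟩
    · exact h
  have hadj_x : G.Adj (g (m+1)) (g m) := by
    rw [hgadj (m+1) (by omega) m (by omega)]; omega
  have hadj_y : G.Adj (g 0) (g 1) := by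
    rw [hgadj 0 (by omega) 1 (by omega)]; omega
  have hgmC : g m ∈ C := hgC m (by omega) (by omega)
  have hg1C : g 1 ∈ C := hgC 1 (by omega) (by omega)
  have hxS : g (m+1) ∉ S := fun hs => hanti _ hgmC _ hs hadj_x.symm
  have hyS : g 0 ∉ S := fun hs => hanti _ hg1C _ hs hadj_y.symm
  obtain ⟨sx, hsxS, hsx⟩ : ∃ s ∈ S, G.Adj (g (m+1)) s := by
    rcases hXN _ hx_X with h | h
    · exact absurd h hxS
    · exact h
  obtain ⟨sy, hsyS, hsy⟩ : ∃ s ∈ S, G.Adj (g 0) s := by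
    rcases hXN _ hy_X with h | h
    · exact absurd h hyS
    · exact h
  have hSg : ∀ s ∈ S, ∀ a, a ≤ m + 1 → s ≠ g a := by
    intro s hs a ha heq
    rcases show a = 0 ∨ (1 ≤ a ∧ a ≤ m) ∨ a = m + 1 by omega with rfl | ⟨h1, h2⟩ | rfl
    · exact hyS (heq ▸ hs)
    · exact hCX _ (hgC a h1 h2) (heq ▸ hSX hs)
    · exact hxS (heq ▸ hs)
  have hSnadjg : ∀ s ∈ S, ∀ a, 1 ≤ a → a ≤ m → ¬ G.Adj s (g a) := by
    intro s hs a h1 h2 hadj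
    exact hanti _ (hgC a h1 h2) _ hs hadj.symm
  by_cases hcom : ∃ s', s' ∈ S ∧ G.Adj (g (m+1)) s' ∧ G.Adj (g 0) s'
  · -- Case A: common neighbor
    obtain ⟨s', hs'S, hs'x, hs'y⟩ := hcom
    set N := m + 3 with hNdef
    set h : ℕ → V := fun a => if a = 0 then s' else g (a - 1) with hdef
    have e0 : h 0 = s' := by simp [hdef]
    have e1 : ∀ a, 1 ≤ a → h a = g (a - 1) := by
      intro a ha; simp only [hdef]; rw [if_neg (by omega)]
    have hhole : IsHoleOn G N {v | ∃ a, a < N ∧ h a = v} := by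
      apply holeOfCycle G (by omega) h
      · -- distinctness
        intro a ha b hb heq
        rcases show a = 0 ∨ 1 ≤ a by omega with rfl | ha1 <;>
          rcases show b = 0 ∨ 1 ≤ b by omega with rfl | hb1
        · rfl
        · rw [e0, e1 b hb1] at heq
          exact absurd heq (hSg s' hs'S (b-1) (by omega))
        · rw [e1 a ha1, e0] at heq
          exact absurd heq.symm (hSg s' hs'S (a-1) (by omega))
        · rw [e1 a ha1, e1 b hb1] at heq
          have := hgdist (a-1) (by omega) (b-1) (by omega) heq
          omega
      · -- adjacency
        intro a ha b hb
        rcases show a = 0 ∨ 1 ≤ a by omega with rfl | ha1 <;>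
          rcases show b = 0 ∨ 1 ≤ b by omega with rfl | hb1
        · rw [e0]
          constructor
          · intro hadj; exact absurd hadj (G.irrefl)
          · intro hp; exfalso; omega
        · rw [e0, e1 b hb1]
          constructor
          · intro hadj
            rcases show b = 1 ∨ b = N - 1 ∨ (2 ≤ b ∧ b ≤ m + 1) by omega with rfl | hbN | ⟨h2, h3⟩
            · left; rfl
            · right; right; left; exact ⟨rfl, hbN⟩
            · exact absurd hadj (hSnadjg s' hs'S (b-1) (by omega) (by omega))
          · intro hp
            rcases show b = 1 ∨ b = N - 1 by omega with rfl | hbN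
            · simpa using hs'y.symm
            · have hb' : b - 1 = m + 1 := by omega
              rw [hb']; exact hs'x.symm
        · rw [e1 a ha1, e0, G.adj_comm]
          constructor
          · intro hadj
            rcases show a = 1 ∨ a = N - 1 ∨ (2 ≤ a ∧ a ≤ m + 1) by omega with rfl | haN | ⟨h2, h3⟩
            · right; left; rfl
            · right; right; right; exact ⟨rfl, haN⟩
            · exact absurd hadj (hSnadjg s' hs'S (a-1) (by omega) (by omega))
          · intro hp
            rcases show a = 1 ∨ a = N - 1 by omega with rfl | haN
            · simpa using hs'y.symm
            · have ha' : a - 1 = m + 1 := by omega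
              rw [ha']; exact hs'x.symm
        · rw [e1 a ha1, e1 b hb1, hgadj (a-1) (by omega) (b-1) (by omega)]
          omega
    apply hYAc {v | ∃ a, a < N ∧ h a = v} ?_ ⟨N, hhole⟩
    rintro v ⟨a, ha, rfl⟩
    rcases show a = 0 ∨ 1 ≤ a by omega with rfl | ha1
    · rw [e0]; exact hSYA hs'S
    · rw [e1 a ha1]; exact hgYA (a-1) (by omega)
  · -- Case B: no common neighbor
    push_neg at hcom
    have hsxsy : sx ≠ sy := fun h => hcom sx hsxS hsx (h ▸ hsy)
    have hnxy : ¬ G.Adj (g (m+1)) sy := fun h => hcom sy hsyS h hsy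
    have hnys : ¬ G.Adj (g 0) sx := fun h => hcom sx hsxS hsx h
    have hadjss : G.Adj sx sy :=
      adj_of_two_mem hl hlen (hSl _ hsxS) (hSl _ hsyS) hsxsy
    set N := m + 4 with hNdef
    set h : ℕ → V := fun a => if a = 0 then sx else if a = 1 then sy else g (a - 2) with hdef
    have e0 : h 0 = sx := by simp [hdef]
    have e1 : h 1 = sy := by simp [hdef]
    have e2 : ∀ a, 2 ≤ a → h a = g (a - 2) := by
      intro a ha; simp only [hdef]; rw [if_neg (by omega), if_neg (by omega)]
    have hhole : IsHoleOn G N {v | ∃ a, a < N ∧ h a = v} := by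
      apply holeOfCycle G (by omega) h
      · -- distinctness
        intro a ha b hb heq
        rcases show a = 0 ∨ a = 1 ∨ 2 ≤ a by omega with rfl | rfl | ha2 <;>
          rcases show b = 0 ∨ b = 1 ∨ 2 ≤ b by omega with rfl | rfl | hb2
        · rfl
        · rw [e0, e1] at heq; exact absurd heq hsxsy
        · rw [e0, e2 b hb2] at heq
          exact absurd heq (hSg sx hsxS (b-2) (by omega))
        · rw [e1, e0] at heq; exact absurd heq.symm hsxsy
        · rfl
        · rw [e1, e2 b hb2] at heq
          exact absurd heq (hSg sy hsyS (b-2) (by omega))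
        · rw [e2 a ha2, e0] at heq
          exact absurd heq.symm (hSg sx hsxS (a-2) (by omega))
        · rw [e2 a ha2, e1] at heq
          exact absurd heq.symm (hSg sy hsyS (a-2) (by omega))
        · rw [e2 a ha2, e2 b hb2] at heq
          have := hgdist (a-2) (by omega) (b-2) (by omega) heq
          omega
      · -- adjacency
        intro a ha b hb
        rcases show a = 0 ∨ a = 1 ∨ 2 ≤ a by omega with rfl | rfl | ha2 <;>
          rcases show b = 0 ∨ b = 1 ∨ 2 ≤ b by omega with rfl | rfl | hb2
        · rw [e0]
          constructor
          · intro hadj; exact absurd hadj (G.irrefl)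
          · intro hp; exfalso; omega
        · rw [e0, e1]
          constructor
          · intro _; left; rfl
          · intro _; exact hadjss
        · rw [e0, e2 b hb2]
          constructor
          · intro hadj
            rcases show b = N - 1 ∨ (b = 2 ∨ (3 ≤ b ∧ b ≤ m + 2)) by omega with hbN | hb'
            · right; right; left; exact ⟨rfl, hbN⟩
            · exfalso
              rcases hb' with rfl | ⟨h3, h4⟩
              · exact hnys (by simpa using hadj.symm)
              · exact hSnadjg sx hsxS (b-2) (by omega) (by omega) hadj
          · intro hp
            have hbN : b = N - 1 := by omega
            have hb' : b - 2 = m + 1 := by omega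
            rw [hb']; exact hsx.symm
        · rw [e1, e0, G.adj_comm]
          constructor
          · intro _; right; left; rfl
          · intro _; exact hadjss
        · rw [e1]
          constructor
          · intro hadj; exact absurd hadj (G.irrefl)
          · intro hp; exfalso; omega
        · rw [e1, e2 b hb2]
          constructor
          · intro hadj
            rcases show b = 2 ∨ b = N - 1 ∨ (3 ≤ b ∧ b ≤ m + 2) by omega with rfl | hbN | ⟨h3, h4⟩
            · left; rfl
            · exfalso
              have hb' : b - 2 = m + 1 := by omega
              rw [hb'] at hadj
              exact hnxy hadj.symm
            · exact absurd hadj (hSnadjg sy hsyS (b-2) (by omega) (by omega))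
          · intro hp
            have hb2' : b = 2 := by omega
            subst hb2'
            simpa using hsy.symm
        · rw [e2 a ha2, e0, G.adj_comm]
          constructor
          · intro hadj
            rcases show a = N - 1 ∨ (a = 2 ∨ (3 ≤ a ∧ a ≤ m + 2)) by omega with haN | ha'
            · right; right; right; exact ⟨rfl, haN⟩
            · exfalso
              rcases ha' with rfl | ⟨h3, h4⟩
              · exact hnys (by simpa using hadj.symm)
              · exact hSnadjg sx hsxS (a-2) (by omega) (by omega) hadj
          · intro hp
            have haN : a = N - 1 := by omega
            have ha' : a - 2 = m + 1 := by omega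
            rw [ha']; exact hsx.symm
        · rw [e2 a ha2, e1, G.adj_comm]
          constructor
          · intro hadj
            rcases show a = 2 ∨ a = N - 1 ∨ (3 ≤ a ∧ a ≤ m + 2) by omega with rfl | haN | ⟨h3, h4⟩
            · right; left; rfl
            · exfalso
              have ha' : a - 2 = m + 1 := by omega
              rw [ha'] at hadj
              exact hnxy hadj.symm
            · exact absurd hadj (hSnadjg sy hsyS (a-2) (by omega) (by omega))
          · intro hp
            have ha2' : a = 2 := by omega
            subst ha2'
            simpa using hsy.symm
        · rw [e2 a ha2, e2 b hb2, hgadj (a-2) (by omega) (b-2) (by omega)]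
          omega
    apply hYAc {v | ∃ a, a < N ∧ h a = v} ?_ ⟨N, hhole⟩
    rintro v ⟨a, ha, rfl⟩
    rcases show a = 0 ∨ a = 1 ∨ 2 ≤ a by omega with rfl | rfl | ha2
    · rw [e0]; exact hSYA hsxS
    · rw [e1]; exact hSYA hsyS
    · rw [e2 a ha2]; exact hgYA (a-2) (by omega)

end AuxLemmas

/-- If `G` is minimal non-weakly FPE with witness path `l` and `X` is a cutset of `G` with
`X ∩ V(l)` nonempty and connected and `X ⊆ N[X ∩ V(l)]`, then no component of `G \ X` is
anticomplete to `X ∩ V(l)`. -/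
theorem stmt17 {V : Type u} [Finite V] (G : SimpleGraph V)
    (hG : MinNonWeaklyFPE G)
    (l : List V) (W1 W2 : Set V) (hw : WeakWitness G l W1 W2)
    (X : Set V) (hcut : ¬ (G.induce (Xᶜ : Set V)).Connected)
    (hconn : (G.induce (X ∩ {v | v ∈ l})).Connected)
    (hXsub : X ⊆ ClosedNbhd G (X ∩ {v | v ∈ l})) :
    ∀ C : Set V, IsCompOf G (Xᶜ) C →
      ∃ u ∈ C, ∃ w ∈ X ∩ {v | v ∈ l}, G.Adj u w := by
  obtain ⟨hpath, hlen, hW1, hW2, hinter, hunion, hnoext⟩ := hw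
  intro C hC
  by_contra hcon0
  push_neg at hcon0
  set P : Set V := {v | v ∈ l} with hPdef
  set S : Set V := X ∩ P with hSdef
  obtain ⟨comp, hCcomp⟩ := hC
  -- basic facts
  have hCnotX : ∀ c ∈ C, c ∉ X := by
    intro c hc
    rw [hCcomp] at hc
    obtain ⟨c', _, rfl⟩ := hc
    exact c'.2
  have hCne : C.Nonempty := by
    obtain ⟨v, hv⟩ := comp.exists_rep
    refine ⟨v.val, ?_⟩
    rw [hCcomp]
    exact ⟨v, by rw [SimpleGraph.ConnectedComponent.mem_supp_iff]; exact hv, rfl⟩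
  have hclose : ∀ u ∈ C, ∀ w, w ∉ X → G.Adj u w → w ∈ C := by
    intro u hu w hw hadj
    rw [hCcomp] at hu ⊢
    obtain ⟨u', hu', rfl⟩ := hu
    refine ⟨⟨w, hw⟩, ?_, rfl⟩
    rw [SimpleGraph.ConnectedComponent.mem_supp_iff] at hu' ⊢
    rw [← hu']
    apply SimpleGraph.ConnectedComponent.sound
    have adj' : (G.induce (Xᶜ : Set V)).Adj ⟨w, hw⟩ u' := by
      simp only [SimpleGraph.comap_adj, Function.Embedding.coe_subtype]
      exact hadj.symm
    exact adj'.reachable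
  have hSne : S.Nonempty := by
    obtain ⟨⟨s, hs⟩⟩ := hconn.nonempty
    exact ⟨s, hs⟩
  have hPC : ∀ v, v ∈ P → v ∉ C := by
    intro v hv hvC
    obtain ⟨s, hsS⟩ := hSne
    have hvs : v ≠ s := fun h => hCnotX v hvC (h ▸ hsS.1)
    have hadj : G.Adj v s := adj_of_two_mem hpath hlen hv hsS.2 hvs
    exact hcon0 v hvC s hsS hadj
  have hNC : ∀ c ∈ C, c ∉ ClosedNbhd G P := by
    intro c hc hmem
    rcases hmem with h | ⟨s, hs, hadj⟩
    · exact hPC c h hc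
    · by_cases hsX : s ∈ X
      · exact hcon0 c hc s ⟨hsX, hs⟩ hadj
      · exact hPC s hs (hclose c hc s hsX hadj)
  have hout : ∃ w, w ∉ X ∧ w ∉ C := by
    by_contra hno
    push_neg at hno
    apply hcut
    rw [SimpleGraph.connected_iff]
    constructor
    · intro u v
      have hu : u.val ∈ C := hno u.val u.2
      have hv : v.val ∈ C := hno v.val v.2
      rw [hCcomp] at hu hv
      obtain ⟨u', hu', huv⟩ := hu
      obtain ⟨v', hv', hvv⟩ := hv
      rw [SimpleGraph.ConnectedComponent.mem_supp_iff] at hu' hv'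
      have h1 : u = u' := Subtype.ext huv.symm
      have h2 : v = v' := Subtype.ext hvv.symm
      rw [h1, h2]
      exact (SimpleGraph.ConnectedComponent.eq).mp (hu'.trans hv'.symm)
    · obtain ⟨c, hc⟩ := hCne
      exact ⟨⟨c, fun h => hCnotX c hc h⟩⟩
  -- Application 1 : the graph G - C
  have hPT1 : ∀ v ∈ l, v ∈ (Cᶜ : Set V) := fun v hv => hPC v hv
  have hT1ne : (Cᶜ : Set V) ≠ Set.univ := by
    obtain ⟨c, hc⟩ := hCne
    intro h
    have : c ∈ (Cᶜ : Set V) := h ▸ Set.mem_univ c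
    exact this hc
  set l1 := l.pmap (fun v h => (⟨v, h⟩ : ↥(Cᶜ : Set V))) hPT1 with hl1def
  have hl1path := inducedPath_lift hpath hPT1
  have hl1len : l1.length ≤ 2 := by rw [hl1def, List.length_pmap]; exact hlen
  have hl1set : {v : ↥(Cᶜ : Set V) | v ∈ l1} = Subtype.val ⁻¹' P := by
    ext v
    rw [Set.mem_setOf_eq, hl1def, mem_pmap_lift hPT1 v]
    rfl
  have hPsub : P ⊆ (Cᶜ : Set V) := fun v hv => hPC v hv
  have hWC : ∀ w ∈ W1 ∪ W2, w ∈ (Cᶜ : Set V) := by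
    intro w hwmem hwc
    rw [hunion] at hwmem
    exact hNC w hwc hwmem
  have hcov1 := hG.2 (Cᶜ : Set V) hT1ne l1 hl1path hl1len
      (Subtype.val ⁻¹' W1) (Subtype.val ⁻¹' W2)
      (chordal_preimage_induce hW1) (chordal_preimage_induce hW2)
      (by rw [← Set.preimage_inter, hinter, hl1set])
      (by rw [← Set.preimage_union, hunion, hl1set, closedNbhd_induce hPsub])
  obtain ⟨Z1, Z2, hZ1W, hZ2W, hZ1c, hZ2c, hZinter, hZunion⟩ := hcov1
  set X1' := Subtype.val '' Z1 with hX1def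
  set X2' := Subtype.val '' Z2 with hX2def
  have hX1c : ChordalSet G X1' := chordal_image_of_induce hZ1c
  have hX2c : ChordalSet G X2' := chordal_image_of_induce hZ2c
  have hX1sub : ∀ v ∈ X1', v ∉ C := by rintro _ ⟨a, _, rfl⟩; exact a.2
  have hX2sub : ∀ v ∈ X2', v ∉ C := by rintro _ ⟨a, _, rfl⟩; exact a.2
  have hinterX : X1' ∩ X2' = P := by
    rw [hX1def, hX2def, ← Set.image_inter Subtype.val_injective, hZinter, hl1set,
      Set.image_preimage_eq_inter_range, Subtype.range_coe]
    exact Set.inter_eq_self_of_subset_left hPsub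
  have hunionX : X1' ∪ X2' = (Cᶜ : Set V) := by
    rw [hX1def, hX2def, ← Set.image_union, hZunion, Set.image_univ, Subtype.range_coe]
  have hW1X1 : W1 ⊆ X1' := by
    intro w hw
    exact ⟨⟨w, hWC w (Or.inl hw)⟩, hZ1W hw, rfl⟩
  have hW2X2 : W2 ⊆ X2' := by
    intro w hw
    exact ⟨⟨w, hWC w (Or.inr hw)⟩, hZ2W hw, rfl⟩
  -- list for S
  have hSX : S ⊆ X := fun v hv => hv.1
  have hSP : ∀ v ∈ S, v ∈ l := fun v hv => hv.2
  obtain ⟨ls, hlspath, hlslen, hlsset⟩ :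
      ∃ ls : List V, IsInducedPathList G ls ∧ ls.length ≤ 2 ∧ {v | v ∈ ls} = S := by
    by_cases hPX : ∀ v ∈ l, v ∈ X
    · refine ⟨l, hpath, hlen, ?_⟩
      ext v
      exact ⟨fun hv => ⟨hPX v hv, hv⟩, fun hv => hv.2⟩
    · push_neg at hPX
      obtain ⟨bb, hbl, hbX⟩ := hPX
      obtain ⟨s0, hs0⟩ := hSne
      refine ⟨[s0], ⟨by simp, by simp, ?_⟩, by simp, ?_⟩
      · intro i j hi hj
        simp only [List.length_singleton] at hi hj
        interval_cases i <;> interval_cases j <;> simp [G.irrefl]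
      · ext v
        simp only [List.mem_singleton, Set.mem_setOf_eq]
        constructor
        · rintro rfl; exact hs0
        · intro hv
          by_contra hne
          exact no_three hpath.2.1 hlen (hSP v hv) (hSP s0 hs0) hbl hne
            (fun h => hbX (h ▸ hs0.1)) (fun h => hbX (h ▸ hv.1))
  -- Application 2 : the graph G[C ∪ X]
  have hT2ne : (C ∪ X) ≠ Set.univ := by
    obtain ⟨w, hwX, hwC⟩ := hout
    intro h
    have : w ∈ C ∪ X := h ▸ Set.mem_univ w
    rcases this with h' | h'
    · exact hwC h'
    · exact hwX h'
  have hST2 : ∀ v ∈ ls, v ∈ C ∪ X := by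
    intro v hv
    exact Or.inr (hSX (by rw [← hlsset]; exact hv))
  have hSsubT2 : S ⊆ C ∪ X := fun v hv => Or.inr (hSX hv)
  set A := S ∪ (X1' ∩ (X \ S)) with hAdef
  set B := S ∪ (X2' ∩ (X \ S)) with hBdef
  have hAB : A ∩ B = S := by
    ext v
    constructor
    · rintro ⟨hvA, hvB⟩
      rcases hvA with h | ⟨h1, h2⟩
      · exact h
      · rcases hvB with h' | ⟨h1', h2'⟩
        · exact h'
        · exfalso
          have hvP : v ∈ P := by
            have : v ∈ X1' ∩ X2' := ⟨h1, h1'⟩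
            rwa [hinterX] at this
          exact h2.2 ⟨h2.1, hvP⟩
    · intro hv
      exact ⟨Or.inl hv, Or.inl hv⟩
  have hABu : A ∪ B = X := by
    ext v
    constructor
    · rintro (h | h) <;> rcases h with h | h
      · exact hSX h
      · exact h.2.1
      · exact hSX h
      · exact h.2.1
    · intro hv
      by_cases hvS : v ∈ S
      · exact Or.inl (Or.inl hvS)
      · have hvT : v ∈ X1' ∪ X2' := by
          rw [hunionX]
          exact fun hc => hCnotX v hc hv
        rcases hvT with h | h
        · exact Or.inl (Or.inr ⟨h, hv, hvS⟩)
        · exact Or.inr (Or.inr ⟨h, hv, hvS⟩)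
  have hPX1 : P ⊆ X1' := by
    intro v hv
    have : v ∈ X1' ∩ X2' := by rw [hinterX]; exact hv
    exact this.1
  have hPX2 : P ⊆ X2' := by
    intro v hv
    have : v ∈ X1' ∩ X2' := by rw [hinterX]; exact hv
    exact this.2
  have hA1 : A ⊆ X1' := by
    rintro v (h | h)
    · exact hPX1 h.2
    · exact h.1
  have hB2 : B ⊆ X2' := by
    rintro v (h | h)
    · exact hPX2 h.2
    · exact h.1
  have hAX : A ⊆ X := by
    rintro v (h | h)
    · exact hSX h
    · exact h.2.1
  have hBX : B ⊆ X := by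
    rintro v (h | h)
    · exact hSX h
    · exact h.2.1
  have hNX : ClosedNbhd (G.induce (C ∪ X)) (Subtype.val ⁻¹' S) = Subtype.val ⁻¹' X := by
    rw [closedNbhd_induce hSsubT2]
    ext v
    simp only [Set.mem_preimage]
    constructor
    · intro h
      rcases h with h | ⟨s, hs, hadj⟩
      · exact hSX h
      · rcases v.2 with hc | hx
        · exact absurd hadj (hcon0 v.val hc s hs)
        · exact hx
    · intro hx
      exact hXsub hx
  set l2 := ls.pmap (fun v h => (⟨v, h⟩ : ↥(C ∪ X))) hST2 with hl2def
  have hl2path := inducedPath_lift hlspath hST2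
  have hl2len : l2.length ≤ 2 := by rw [hl2def, List.length_pmap]; exact hlslen
  have hl2set : {v : ↥(C ∪ X) | v ∈ l2} = Subtype.val ⁻¹' S := by
    ext v
    rw [Set.mem_setOf_eq, hl2def, mem_pmap_lift hST2 v, Set.mem_preimage, ← hlsset]
    rfl
  have hcov2 := hG.2 (C ∪ X) hT2ne l2 hl2path hl2len
      (Subtype.val ⁻¹' A) (Subtype.val ⁻¹' B)
      (chordal_preimage_induce (chordal_mono hA1 hX1c))
      (chordal_preimage_induce (chordal_mono hB2 hX2c))
      (by rw [← Set.preimage_inter, hAB, hl2set])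
      (by rw [← Set.preimage_union, hABu, hl2set, hNX])
  obtain ⟨Z1', Z2', hZ1W', hZ2W', hZ1c', hZ2c', hZinter', hZunion'⟩ := hcov2
  set Y1 := Subtype.val '' Z1' with hY1def
  set Y2 := Subtype.val '' Z2' with hY2def
  have hY1c : ChordalSet G Y1 := chordal_image_of_induce hZ1c'
  have hY2c : ChordalSet G Y2 := chordal_image_of_induce hZ2c'
  have hYinter : Y1 ∩ Y2 = S := by
    rw [hY1def, hY2def, ← Set.image_inter Subtype.val_injective, hZinter', hl2set,
      Set.image_preimage_eq_inter_range, Subtype.range_coe]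
    exact Set.inter_eq_self_of_subset_left hSsubT2
  have hYunion : Y1 ∪ Y2 = C ∪ X := by
    rw [hY1def, hY2def, ← Set.image_union, hZunion', Set.image_univ, Subtype.range_coe]
  have hY1sub : Y1 ⊆ C ∪ X := by rintro _ ⟨a, _, rfl⟩; exact a.2
  have hY2sub : Y2 ⊆ C ∪ X := by rintro _ ⟨a, _, rfl⟩; exact a.2
  have hAY1 : A ⊆ Y1 := fun a ha => ⟨⟨a, Or.inr (hAX ha)⟩, hZ1W' ha, rfl⟩
  have hBY2 : B ⊆ Y2 := fun a ha => ⟨⟨a, Or.inr (hBX ha)⟩, hZ2W' ha, rfl⟩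
  have hXX1A : X ∩ X1' ⊆ A := by
    rintro v ⟨hvX, hv1⟩
    by_cases hvS : v ∈ S
    · exact Or.inl hvS
    · exact Or.inr ⟨hv1, hvX, hvS⟩
  have hXX2B : X ∩ X2' ⊆ B := by
    rintro v ⟨hvX, hv2⟩
    by_cases hvS : v ∈ S
    · exact Or.inl hvS
    · exact Or.inr ⟨hv2, hvX, hvS⟩
  have hXY1 : X ∩ Y1 ⊆ X1' := by
    rintro v ⟨hvX, hv1⟩
    by_cases hvS : v ∈ S
    · exact hPX1 hvS.2
    · have hvT : v ∈ X1' ∪ X2' := by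
        rw [hunionX]
        exact fun hc => hCnotX v hc hvX
      rcases hvT with h | h
      · exact h
      · exfalso
        have : v ∈ Y1 ∩ Y2 := ⟨hv1, hBY2 (hXX2B ⟨hvX, h⟩)⟩
        rw [hYinter] at this
        exact hvS this
  have hXY2 : X ∩ Y2 ⊆ X2' := by
    rintro v ⟨hvX, hv2⟩
    by_cases hvS : v ∈ S
    · exact hPX2 hvS.2
    · have hvT : v ∈ X1' ∪ X2' := by
        rw [hunionX]
        exact fun hc => hCnotX v hc hvX
      rcases hvT with h | h
      · exfalso
        have : v ∈ Y1 ∩ Y2 := ⟨hAY1 (hXX1A ⟨hvX, h⟩), hv2⟩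
        rw [hYinter] at this
        exact hvS this
      · exact h
  -- the extension, contradiction
  apply hnoext
  have hXN : ∀ x ∈ X, x ∈ S ∨ ∃ s ∈ S, G.Adj x s := by
    intro x hx
    rcases hXsub hx with h | h
    · exact Or.inl h
    · exact Or.inr h
  refine ⟨X1' ∪ Y1, X2' ∪ Y2, hW1X1.trans Set.subset_union_left,
    hW2X2.trans Set.subset_union_left, ?_, ?_, ?_, ?_⟩
  · exact side_chordal G C X S l hpath hlen hSP hSX hCnotX hcon0 hclose hXN
      X1' Y1 hX1c hY1c hX1sub hY1sub (hXX1A.trans hAY1) hXY1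
      (fun s hs => hAY1 (Or.inl hs))
  · exact side_chordal G C X S l hpath hlen hSP hSX hCnotX hcon0 hclose hXN
      X2' Y2 hX2c hY2c hX2sub hY2sub (hXX2B.trans hBY2) hXY2
      (fun s hs => hBY2 (Or.inl hs))
  · ext v
    constructor
    · rintro ⟨h1 | h1, h2 | h2⟩
      · have : v ∈ X1' ∩ X2' := ⟨h1, h2⟩
        rwa [hinterX] at this
      · have hvX : v ∈ X := by
          rcases hY2sub h2 with hc | hx
          · exact absurd hc (hX1sub v h1)
          · exact hx
        have : v ∈ X1' ∩ X2' := ⟨h1, hXY2 ⟨hvX, h2⟩⟩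
        rwa [hinterX] at this
      · have hvX : v ∈ X := by
          rcases hY1sub h1 with hc | hx
          · exact absurd hc (hX2sub v h2)
          · exact hx
        have : v ∈ X1' ∩ X2' := ⟨hXY1 ⟨hvX, h1⟩, h2⟩
        rwa [hinterX] at this
      · have : v ∈ Y1 ∩ Y2 := ⟨h1, h2⟩
        rw [hYinter] at this
        exact this.2
    · intro hv
      exact ⟨Or.inl (hPX1 hv), Or.inl (hPX2 hv)⟩
  · rw [Set.eq_univ_iff_forall]
    intro v
    by_cases hvC : v ∈ C
    · have : v ∈ Y1 ∪ Y2 := by rw [hYunion]; exact Or.inl hvC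
      rcases this with h | h
      · exact Or.inl (Or.inr h)
      · exact Or.inr (Or.inr h)
    · have : v ∈ X1' ∪ X2' := by rw [hunionX]; exact hvC
      rcases this with h | h
      · exact Or.inl (Or.inl h)
      · exact Or.inr (Or.inl h)
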